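/- Let γ ∈ (0,1) and let C > 0 satisfy γ·C^γ + γ - 1 ≥ 0. Then for a nonnegative real random variable Z with finite expectation, exp((E[Z])^γ) ≤ exp(C^γ) · E[exp(Z^γ)]. -/

import Mathlib

open MeasureTheory

lemma my_rpow_subadd {x y p : ℝ} (hx : 0 ≤ x) (hy : 0 ≤ y) (hp : 0 ≤ p) (hp1 : p ≤ 1) :
    (x + y) ^ p ≤ x ^ p + y ^ p := by
  lift x to NNReal using hx
  lift y to NNReal using hy
  have h := NNReal.rpow_add_le_add_rpow x y hp hp1
  exact_mod_cast h

lemma my_convex (γ C : ℝ) (hγ0 : 0 < γ) (hγ1 : γ < 1) (hC : 0 < C)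
    (hCγ : γ * C ^ γ + γ - 1 ≥ 0) :
    ConvexOn ℝ (Set.Ici 0) (fun x : ℝ => Real.exp ((C + x) ^ γ)) := by
  have hint : interior (Set.Ici (0:ℝ)) = Set.Ioi 0 := interior_Ici
  apply convexOn_of_hasDerivWithinAt2_nonneg (f' := fun x => γ * (C + x) ^ (γ - 1) * Real.exp ((C + x) ^ γ))
    (f'' := fun x => (γ * ((γ - 1) * (C + x) ^ (γ - 2))) * Real.exp ((C + x) ^ γ)
      + γ * (C + x) ^ (γ - 1) * (Real.exp ((C + x) ^ γ) * (γ * (C + x) ^ (γ - 1))))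
    (convex_Ici 0)
  · apply Real.continuous_exp.comp_continuousOn
    apply ContinuousOn.rpow_const ((continuous_const.add continuous_id).continuousOn)
    intro x hx
    exact Or.inl (by simp only [Set.mem_Ici] at hx; show C + x ≠ 0; positivity)
  · intro x hx
    rw [hint] at hx
    have hx0 : (0:ℝ) < x := hx
    have hy : (0:ℝ) < C + x := by linarith
    have h1 : HasDerivAt (fun x : ℝ => (C + x) ^ γ) (γ * (C + x) ^ (γ - 1)) x := by
      have := (Real.hasDerivAt_rpow_const (x := C + x) (p := γ) (Or.inl hy.ne')).comp x
        ((hasDerivAt_id x).const_add C)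
      simpa [Function.comp_def] using this
    exact (h1.exp).hasDerivWithinAt.congr_deriv (by ring)
  · intro x hx
    rw [hint] at hx
    have hx0 : (0:ℝ) < x := hx
    have hy : (0:ℝ) < C + x := by linarith
    have h0 : HasDerivAt (fun x : ℝ => C + x) 1 x := (hasDerivAt_id x).const_add C
    have h1 : HasDerivAt (fun x : ℝ => (C + x) ^ γ) (γ * (C + x) ^ (γ - 1)) x := by
      have := (Real.hasDerivAt_rpow_const (x := C + x) (p := γ) (Or.inl hy.ne')).comp x h0
      simpa [Function.comp_def] using this
    have h2 : HasDerivAt (fun x : ℝ => γ * (C + x) ^ (γ - 1))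
        (γ * ((γ - 1) * (C + x) ^ (γ - 2))) x := by
      have := ((Real.hasDerivAt_rpow_const (x := C + x) (p := γ - 1) (Or.inl hy.ne')).comp x
        h0).const_mul γ
      have he : γ - 1 - 1 = γ - 2 := by ring
      simpa [he] using this
    exact ((h2.mul h1.exp)).hasDerivWithinAt
  · intro x hx
    rw [hint] at hx
    have hx0 : (0:ℝ) < x := hx
    have hy : (0:ℝ) < C + x := by linarith
    have hkey : γ * (C + x) ^ γ + γ - 1 ≥ 0 := by
      have : C ^ γ ≤ (C + x) ^ γ := Real.rpow_le_rpow hC.le (by linarith) hγ0.le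
      nlinarith
    have e1 : (C + x) ^ (γ - 1) * (C + x) ^ (γ - 1) = (C + x) ^ (γ - 2) * (C + x) ^ γ := by
      rw [← Real.rpow_add hy, ← Real.rpow_add hy]
      ring_nf
    have hexp : (0:ℝ) < Real.exp ((C + x) ^ γ) := Real.exp_pos _
    have hp2 : (0:ℝ) < (C + x) ^ (γ - 2) := Real.rpow_pos_of_pos hy _
    have heq : (γ * ((γ - 1) * (C + x) ^ (γ - 2))) * Real.exp ((C + x) ^ γ)
        + γ * (C + x) ^ (γ - 1) * (Real.exp ((C + x) ^ γ) * (γ * (C + x) ^ (γ - 1)))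
        = Real.exp ((C + x) ^ γ) * (γ * (C + x) ^ (γ - 2)) * (γ * (C + x) ^ γ + γ - 1) := by
      have : γ * (C + x) ^ (γ - 1) * (Real.exp ((C + x) ^ γ) * (γ * (C + x) ^ (γ - 1)))
          = γ * γ * ((C + x) ^ (γ - 1) * (C + x) ^ (γ - 1)) * Real.exp ((C + x) ^ γ) := by ring
      rw [this, e1]; ring
    rw [heq]
    have : 0 ≤ Real.exp ((C + x) ^ γ) * (γ * (C + x) ^ (γ - 2)) := by positivity
    exact mul_nonneg this hkey

theorem stmt_1 {Ω : Type*} [MeasurableSpace Ω] (ℙ : Measure Ω) [IsProbabilityMeasure ℙ]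
    (γ C : ℝ) (hγ0 : 0 < γ) (hγ1 : γ < 1) (hC : 0 < C)
    (hCγ : γ * C ^ γ + γ - 1 ≥ 0)
    (Z : Ω → ℝ) (hZ_meas : Measurable Z) (hZ_nonneg : ∀ ω, 0 ≤ Z ω)
    (hZ_int : Integrable Z ℙ) :
    ENNReal.ofReal (Real.exp ((∫ ω, Z ω ∂ℙ) ^ γ)) ≤
      ENNReal.ofReal (Real.exp (C ^ γ)) *
        ∫⁻ ω, ENNReal.ofReal (Real.exp (Z ω ^ γ)) ∂ℙ := by
  by_cases hfin : ∫⁻ ω, ENNReal.ofReal (Real.exp (Z ω ^ γ)) ∂ℙ = ⊤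
  · rw [hfin, ENNReal.mul_top (by simp [Real.exp_pos])]
    exact le_top
  · -- g = exp(Z^γ) is integrable
    have hg_meas : Measurable fun ω => Real.exp (Z ω ^ γ) :=
      Real.measurable_exp.comp ((Real.continuous_rpow_const hγ0.le).measurable.comp hZ_meas)
    have hg_nonneg : ∀ ω, 0 ≤ Real.exp (Z ω ^ γ) := fun ω => (Real.exp_pos _).le
    have hgint : Integrable (fun ω => Real.exp (Z ω ^ γ)) ℙ :=
      ⟨hg_meas.aestronglyMeasurable,
        (hasFiniteIntegral_iff_ofReal (Filter.Eventually.of_forall hg_nonneg)).2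
          (lt_top_iff_ne_top.2 hfin)⟩
    -- pointwise bound : exp((C+Z)^γ) ≤ exp(C^γ) * exp(Z^γ)
    have hbound : ∀ ω, Real.exp ((C + Z ω) ^ γ) ≤ Real.exp (C ^ γ) * Real.exp (Z ω ^ γ) := by
      intro ω
      rw [← Real.exp_add]
      exact Real.exp_le_exp.2 (my_rpow_subadd hC.le (hZ_nonneg ω) hγ0.le hγ1.le)
    have hf_meas : Measurable fun ω => Real.exp ((C + Z ω) ^ γ) :=
      Real.measurable_exp.comp ((Real.continuous_rpow_const hγ0.le).measurable.comp (measurable_const.add hZ_meas))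
    have hfint : Integrable (fun ω => Real.exp ((C + Z ω) ^ γ)) ℙ := by
      refine Integrable.mono' (hgint.const_mul (Real.exp (C ^ γ)))
        hf_meas.aestronglyMeasurable (Filter.Eventually.of_forall fun ω => ?_)
      rw [Real.norm_eq_abs, abs_of_nonneg (Real.exp_pos _).le]
      exact hbound ω
    -- Jensen
    have hconv := my_convex γ C hγ0 hγ1 hC hCγ
    have hgc : ContinuousOn (fun x : ℝ => Real.exp ((C + x) ^ γ)) (Set.Ici 0) := by
      apply Real.continuous_exp.comp_continuousOn
      apply ContinuousOn.rpow_const ((continuous_const.add continuous_id).continuousOn)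
      intro x hx
      exact Or.inl (by simp only [Set.mem_Ici] at hx; show C + x ≠ 0; positivity)
    have hjen : Real.exp ((C + ∫ ω, Z ω ∂ℙ) ^ γ) ≤ ∫ ω, Real.exp ((C + Z ω) ^ γ) ∂ℙ :=
      hconv.map_integral_le hgc isClosed_Ici
        (Filter.Eventually.of_forall fun ω => hZ_nonneg ω) hZ_int hfint
    have hEZ : 0 ≤ ∫ ω, Z ω ∂ℙ := integral_nonneg hZ_nonneg
    have step1 : Real.exp ((∫ ω, Z ω ∂ℙ) ^ γ) ≤ Real.exp ((C + ∫ ω, Z ω ∂ℙ) ^ γ) :=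
      Real.exp_le_exp.2 (Real.rpow_le_rpow hEZ (by linarith) hγ0.le)
    have step2 : (∫ ω, Real.exp ((C + Z ω) ^ γ) ∂ℙ)
        ≤ Real.exp (C ^ γ) * ∫ ω, Real.exp (Z ω ^ γ) ∂ℙ := by
      rw [← integral_const_mul]
      exact integral_mono hfint (hgint.const_mul _) hbound
    have hlin : ∫⁻ ω, ENNReal.ofReal (Real.exp (Z ω ^ γ)) ∂ℙ
        = ENNReal.ofReal (∫ ω, Real.exp (Z ω ^ γ) ∂ℙ) :=
      (ofReal_integral_eq_lintegral_ofReal hgint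
        (Filter.Eventually.of_forall hg_nonneg)).symm
    rw [hlin, ← ENNReal.ofReal_mul (Real.exp_pos _).le]
    exact ENNReal.ofReal_le_ofReal (by linarith)
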